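/- Let 0 → N₁ → N → N₂ → 0 be a short exact sequence of R-modules and M an R-module. If for every f : M → N₁ and every g : M → N₂ the kernels ker f and ker g are fully invariant direct summands of M, then for every h : M → N, ker h is a fully invariant direct summand of M. -/

import Mathlib

/-- A submodule `K` of `M` is a fully invariant direct summand if it has a complement
and is stable under every endomorphism of `M`. -/
def FullyInvariantDirectSummand {R M : Type*} [Ring R] [AddCommGroup M] [Module R M]
    (K : Submodule R M) : Prop :=
  (∃ K' : Submodule R M, IsCompl K K') ∧ ∀ φ : Module.End R M, K.map φ ≤ K

lemma fids_inf {R M : Type*} [Ring R] [AddCommGroup M] [Module R M]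
    {A B : Submodule R M} (hA : FullyInvariantDirectSummand A)
    (hB : FullyInvariantDirectSummand B) :
    FullyInvariantDirectSummand (A ⊓ B) := by
  obtain ⟨⟨A', hA'⟩, hAinv⟩ := hA
  obtain ⟨⟨B', hB'⟩, hBinv⟩ := hB
  -- projections onto A and A'
  set π : Module.End R M := A.subtype.comp (A.linearProjOfIsCompl A' hA') with hπ
  set π' : Module.End R M := A'.subtype.comp (A'.linearProjOfIsCompl A hA'.symm) with hπ'
  have hsum : ∀ x : M, π x + π' x = x := by
    intro x
    exact Submodule.projection_add_projection_eq_self hA' x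
  have hπA : ∀ x : M, π x ∈ A := fun x => (A.linearProjOfIsCompl A' hA' x).2
  have hπ'A' : ∀ x : M, π' x ∈ A' := fun x => (A'.linearProjOfIsCompl A hA'.symm x).2
  have hπB : ∀ x ∈ B, π x ∈ B := fun x hx =>
    hBinv π (Submodule.mem_map.mpr ⟨x, hx, rfl⟩)
  have hπ'B : ∀ x ∈ B, π' x ∈ B := fun x hx =>
    hBinv π' (Submodule.mem_map.mpr ⟨x, hx, rfl⟩)
  refine ⟨⟨(A' ⊓ B) ⊔ B', ?_, ?_⟩, ?_⟩
  · -- disjoint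
    rw [disjoint_iff_inf_le]
    rintro x ⟨⟨hxA, hxB⟩, hx2⟩
    obtain ⟨y, hy, z, hz, rfl⟩ := Submodule.mem_sup.mp hx2
    have hzB : z ∈ B := by
      have : z = (y + z) - y := by abel
      rw [this]; exact Submodule.sub_mem B hxB hy.2
    have hz0 : z = 0 := (Submodule.disjoint_def.mp hB'.disjoint) z hzB hz
    subst hz0
    have hy0 : y = 0 := (Submodule.disjoint_def.mp hA'.disjoint) y (by simpa using hxA) hy.1
    simp [hy0]
  · -- codisjoint
    rw [codisjoint_iff_le_sup]
    intro x _
    have hx : x ∈ B ⊔ B' := by rw [hB'.sup_eq_top]; trivial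
    obtain ⟨b, hb, b', hb', rfl⟩ := Submodule.mem_sup.mp hx
    have : b + b' = π b + (π' b + b') := by rw [← add_assoc, hsum]
    rw [this]
    refine Submodule.add_mem_sup ⟨hπA b, hπB b hb⟩ ?_
    exact Submodule.add_mem_sup ⟨hπ'A' b, hπ'B b hb⟩ hb'
  · intro φ
    rintro _ ⟨x, ⟨hxA, hxB⟩, rfl⟩
    exact ⟨hAinv φ ⟨x, hxA, rfl⟩, hBinv φ ⟨x, hxB, rfl⟩⟩

theorem stmt_16 (R M N N₁ N₂ : Type*) [Ring R]
    [AddCommGroup M] [Module R M] [AddCommGroup N] [Module R N]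
    [AddCommGroup N₁] [Module R N₁] [AddCommGroup N₂] [Module R N₂]
    (i : N₁ →ₗ[R] N) (p : N →ₗ[R] N₂)
    (hi : Function.Injective i) (hp : Function.Surjective p)
    (hexact : LinearMap.range i = LinearMap.ker p)
    (h₁ : ∀ f : M →ₗ[R] N₁, FullyInvariantDirectSummand (LinearMap.ker f))
    (h₂ : ∀ g : M →ₗ[R] N₂, FullyInvariantDirectSummand (LinearMap.ker g)) :
    ∀ h : M →ₗ[R] N, FullyInvariantDirectSummand (LinearMap.ker h) := by
  intro h
  set g : M →ₗ[R] N₂ := p.comp h with hg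
  obtain ⟨⟨K', hK'⟩, -⟩ := h₂ g
  set e : Module.End R M :=
    (LinearMap.ker g).subtype.comp ((LinearMap.ker g).linearProjOfIsCompl K' hK') with he
  have heg : ∀ x : M, g (e x) = 0 :=
    fun x => ((LinearMap.ker g).linearProjOfIsCompl K' hK' x).2
  have hefix : ∀ x ∈ LinearMap.ker g, e x = x := by
    intro x hx
    exact congrArg ((LinearMap.ker g).subtype)
      (Submodule.linearProjOfIsCompl_apply_left hK' ⟨x, hx⟩)
  have hmem : ∀ x : M, h (e x) ∈ LinearMap.range i := by
    intro x
    rw [hexact, LinearMap.mem_ker]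
    exact heg x
  set eqv := LinearEquiv.ofInjective i hi
  set f : M →ₗ[R] N₁ :=
    (eqv.symm : LinearMap.range i →ₗ[R] N₁).comp
      ((h.comp e).codRestrict (LinearMap.range i) hmem) with hf
  have hif : ∀ x : M, i (f x) = h (e x) := by
    intro x
    have : (eqv (f x) : N) = h (e x) := by
      simp [hf, eqv]
    exact this
  have hker : LinearMap.ker h = LinearMap.ker f ⊓ LinearMap.ker g := by
    ext x
    simp only [Submodule.mem_inf, LinearMap.mem_ker]
    constructor
    · intro hx
      have hxg : g x = 0 := by simp [hg, hx]
      refine ⟨?_, hxg⟩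
      have : i (f x) = 0 := by rw [hif, hefix x hxg, hx]
      exact hi (by simpa using this)
    · rintro ⟨hxf, hxg⟩
      have := hif x
      rw [hxf, hefix x hxg] at this
      simpa using this.symm
  rw [hker]
  exact fids_inf (h₁ f) (h₂ g)
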